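/- Let A be a nonsingular 4×4 (−1,1)-matrix. Then |per A| ≤ 8 = per D_{(4,4)}; if |per A| = 8 then A can be obtained from D_{(4,4)} by standard transformations; and if |per A| < 8 then |per A| ≤ 4 = per D_{(4,3)}. -/

import Mathlib

open Matrix

/-- The permanent of a square matrix. -/
def per {n : ℕ} (A : Matrix (Fin n) (Fin n) ℚ) : ℚ :=
  ∑ σ : Equiv.Perm (Fin n), ∏ i, A i (σ i)

/-- The square matrix `D_{(n,l)}`: `-1` on the first `l` diagonal entries, `1` elsewhere. -/
def Dmat (n l : ℕ) : Matrix (Fin n) (Fin n) ℚ :=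
  fun i j => if (i : ℕ) = (j : ℕ) ∧ (j : ℕ) < l then -1 else 1

/-- `A` is obtained from `B` by standard transformations: a finite composition of row
permutations, column permutations, multiplications of rows/columns by `-1`, and
transposition (square case). -/
def StdEquiv {n : ℕ} (A B : Matrix (Fin n) (Fin n) ℚ) : Prop :=
  ∃ (ρ σ : Equiv.Perm (Fin n)) (ε δ : Fin n → ℚ),
    (∀ i, ε i = 1 ∨ ε i = -1) ∧ (∀ j, δ j = 1 ∨ δ j = -1) ∧
    ((∀ i j, A i j = ε i * δ j * B (ρ i) (σ j)) ∨
     (∀ i j, A i j = ε i * δ j * B (σ j) (ρ i)))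

/- ### Auxiliary machinery -/

theorem per_succ {n : ℕ} (A : Matrix (Fin (n+1)) (Fin (n+1)) ℚ) :
    per A = ∑ p : Fin (n+1), A 0 p *
      per (A.submatrix Fin.succ fun j => Equiv.swap 0 p (Fin.succ j)) := by
  rw [per, Finset.univ_perm_fin_succ, ← Finset.univ_product_univ, Finset.sum_map,
    Finset.sum_product]
  refine Finset.sum_congr rfl fun p _ => ?_
  rw [per, Finset.mul_sum]
  refine Finset.sum_congr rfl fun e _ => ?_
  rw [Fin.prod_univ_succ]
  simp [Equiv.Perm.decomposeFin_symm_apply_zero, Equiv.Perm.decomposeFin_symm_apply_succ]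

def perE : {n : ℕ} → Matrix (Fin n) (Fin n) ℚ → ℚ
  | 0, _ => 1
  | _+1, A => ∑ p, A 0 p * perE (A.submatrix Fin.succ fun j => Equiv.swap 0 p (Fin.succ j))

theorem per_eq_perE : ∀ {n : ℕ} (A : Matrix (Fin n) (Fin n) ℚ), per A = perE A
  | 0, A => by simp [per, perE]
  | n+1, A => by
    rw [per_succ, perE]
    exact Finset.sum_congr rfl fun p _ => by rw [per_eq_perE]

def detE : {n : ℕ} → Matrix (Fin n) (Fin n) ℚ → ℚ
  | 0, _ => 1
  | _+1, A => ∑ j : Fin _, (-1)^(j:ℕ) * A 0 j * detE (A.submatrix Fin.succ j.succAbove)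

theorem det_eq_detE : ∀ {n : ℕ} (A : Matrix (Fin n) (Fin n) ℚ), det A = detE A
  | 0, _ => det_fin_zero
  | n+1, A => by
    rw [det_succ_row_zero, detE]
    exact Finset.sum_congr rfl fun p _ => by rw [det_eq_detE]

def perZ : {n : ℕ} → Matrix (Fin n) (Fin n) ℤ → ℤ
  | 0, _ => 1
  | _+1, A => ∑ p, A 0 p * perZ (A.submatrix Fin.succ fun j => Equiv.swap 0 p (Fin.succ j))

def detZ : {n : ℕ} → Matrix (Fin n) (Fin n) ℤ → ℤ
  | 0, _ => 1
  | _+1, A => ∑ j : Fin _, (-1)^(j:ℕ) * A 0 j * detZ (A.submatrix Fin.succ j.succAbove)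

theorem castPer : ∀ {n : ℕ} (M : Matrix (Fin n) (Fin n) ℤ),
    perE (fun i j => ((M i j : ℤ) : ℚ)) = ((perZ M : ℤ) : ℚ)
  | 0, M => by simp [perE, perZ]
  | n+1, M => by
    simp only [perE, perZ]
    push_cast
    refine Finset.sum_congr rfl fun p _ => ?_
    congr 1
    exact castPer _

theorem castDet : ∀ {n : ℕ} (M : Matrix (Fin n) (Fin n) ℤ),
    detE (fun i j => ((M i j : ℤ) : ℚ)) = ((detZ M : ℤ) : ℚ)
  | 0, M => by simp [detE, detZ]
  | n+1, M => by
    simp only [detE, detZ]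
    push_cast
    refine Finset.sum_congr rfl fun p _ => ?_
    congr 1
    exact castDet _

def zz (b : Bool) : ℤ := cond b 1 (-1)

def MgZ (g : Fin 3 → Fin 3 → Bool) : Matrix (Fin 4) (Fin 4) ℤ :=
  fun i j => if (i:ℕ) = 0 ∨ (j:ℕ) = 0 then 1 else
    zz (g ⟨min 2 ((i:ℕ)-1), Nat.lt_succ_of_le (Nat.min_le_left _ _)⟩
          ⟨min 2 ((j:ℕ)-1), Nat.lt_succ_of_le (Nat.min_le_left _ _)⟩)

def DZ : Matrix (Fin 4) (Fin 4) ℤ := fun i j => if (i:ℕ) = (j:ℕ) then -1 else 1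

instance MgZ_decEq (g : Fin 3 → Fin 3 → Bool) (i j : Fin 4) (x : ℤ) : Decidable (MgZ g i j = x) :=
  Int.decEq _ _

set_option maxRecDepth 100000 in
set_option maxHeartbeats 4000000 in
theorem MAIN : ∀ g : Fin 3 → Fin 3 → Bool,
  detZ (MgZ g) ≠ 0 →
    (-8 ≤ perZ (MgZ g) ∧ perZ (MgZ g) ≤ 8) ∧
    ((perZ (MgZ g) = 8 ∨ perZ (MgZ g) = -8) →
      ∃ f f' : Fin 4 → Fin 4, (∀ a b, f a = f b → a = b) ∧ ((∀ a b, f' a = f' b → a = b) ∧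
        ∀ i j, MgZ g i j = (DZ (f i) (f' 0) * DZ (f 0) (f' 0)) *
          DZ (f 0) (f' j) * DZ (f i) (f' j))) ∧
    ((¬(perZ (MgZ g) = 8 ∨ perZ (MgZ g) = -8)) → -4 ≤ perZ (MgZ g) ∧ perZ (MgZ g) ≤ 4) :=
  of_decide_eq_true (by with_unfolding_all rfl)

theorem pm_mul {x y : ℚ} (hx : x = 1 ∨ x = -1) (hy : y = 1 ∨ y = -1) :
    x * y = 1 ∨ x * y = -1 := by
  rcases hx with h | h <;> rcases hy with h' | h' <;> rw [h, h'] <;> norm_num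

theorem sq1 {x : ℚ} (hx : x = 1 ∨ x = -1) : x * x = 1 := by
  rcases hx with h | h <;> rw [h] <;> norm_num

theorem prod_pm (f : Fin 4 → ℚ) (h : ∀ i, f i = 1 ∨ f i = -1) :
    (∏ i, f i) = 1 ∨ (∏ i, f i) = -1 :=
  Finset.prod_induction f (fun x => x = 1 ∨ x = -1) (fun _ _ ha hb => pm_mul ha hb)
    (Or.inl rfl) (fun i _ => h i)

theorem per_smul (e d : Fin 4 → ℚ) (A : Matrix (Fin 4) (Fin 4) ℚ) :
    per (fun i j => e i * d j * A i j) = ((∏ i, e i) * (∏ j, d j)) * per A := by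
  unfold per
  rw [Finset.mul_sum]
  refine Finset.sum_congr rfl fun σ _ => ?_
  have h1 : ∏ i, ((fun i j => e i * d j * A i j : Matrix (Fin 4) (Fin 4) ℚ) i (σ i))
      = ((∏ i, e i) * ∏ i, d (σ i)) * ∏ i, A i (σ i) := by
    rw [← Finset.prod_mul_distrib, ← Finset.prod_mul_distrib]
  rw [h1, Equiv.prod_comp σ d]

theorem hD_cast : ∀ a b : Fin 4, Dmat 4 4 a b = ((DZ a b : ℤ) : ℚ) := by
  intro a b
  by_cases h : (a:ℕ) = (b:ℕ) <;> simp [Dmat, DZ, h, b.is_lt]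

theorem DZ_pm (a b : Fin 4) : ((DZ a b : ℤ) : ℚ) = 1 ∨ ((DZ a b : ℤ) : ℚ) = -1 := by
  by_cases h : (a:ℕ) = (b:ℕ) <;> simp [DZ, h]

theorem key_mk (a : Fin 3) :
    (⟨min 2 (((a.succ : Fin 4) : ℕ) - 1), Nat.lt_succ_of_le (Nat.min_le_left _ _)⟩ : Fin 3)
      = a := by
  ext
  simp only [Fin.val_succ]
  omega

theorem MgZ_succ (g : Fin 3 → Fin 3 → Bool) (a b : Fin 3) :
    MgZ g a.succ b.succ = zz (g a b) := by
  unfold MgZ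
  rw [if_neg, key_mk, key_mk]
  rintro (h | h) <;> simp [Fin.val_succ] at h

theorem order_four_nonsingular (A : Matrix (Fin 4) (Fin 4) ℚ)
    (hA : ∀ i j, A i j = 1 ∨ A i j = -1) (hdet : A.det ≠ 0) :
    |per A| ≤ 8 ∧ per (Dmat 4 4) = 8 ∧
      (|per A| = 8 → StdEquiv A (Dmat 4 4)) ∧
      (|per A| < 8 → |per A| ≤ 4) ∧ per (Dmat 4 3) = 4 := by
  classical
  set e : Fin 4 → ℚ := fun i => A i 0 with he_def
  set d : Fin 4 → ℚ := fun j => A 0 j * A 0 0 with hd_def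
  set B : Matrix (Fin 4) (Fin 4) ℚ := fun i j => e i * d j * A i j with hB_def
  set g : Fin 3 → Fin 3 → Bool := fun i j => decide (B i.succ j.succ = 1) with hg_def
  have he : ∀ i, e i = 1 ∨ e i = -1 := fun i => hA i 0
  have hd : ∀ j, d j = 1 ∨ d j = -1 := fun j => pm_mul (hA 0 j) (hA 0 0)
  have hBpm : ∀ i j, B i j = 1 ∨ B i j = -1 := fun i j => pm_mul (pm_mul (he i) (hd j)) (hA i j)
  -- B equals the cast of the integer matrix `MgZ g`
  have hcast : ∀ i j, B i j = ((MgZ g i j : ℤ) : ℚ) := by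
    intro i j
    by_cases hi : i = 0
    · subst hi
      have : MgZ g 0 j = 1 := by simp [MgZ]
      rw [this]
      show A 0 0 * (A 0 j * A 0 0) * A 0 j = ((1 : ℤ) : ℚ)
      push_cast
      linear_combination (A 0 j * A 0 j) * sq1 (hA 0 0) + sq1 (hA 0 j)
    · by_cases hj : j = 0
      · subst hj
        have : MgZ g i 0 = 1 := by simp [MgZ]
        rw [this]
        show A i 0 * (A 0 0 * A 0 0) * A i 0 = ((1 : ℤ) : ℚ)
        push_cast
        linear_combination (A 0 0 * A 0 0) * sq1 (hA i 0) + sq1 (hA 0 0)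
      · obtain ⟨a, rfl⟩ := Fin.exists_succ_eq.mpr hi
        obtain ⟨b, rfl⟩ := Fin.exists_succ_eq.mpr hj
        rw [MgZ_succ]
        have hg : g a b = decide (B a.succ b.succ = 1) := rfl
        rcases hBpm a.succ b.succ with h | h <;> rw [h] <;> rw [hg, h] <;> norm_num [zz]
  have hBM : B = fun i j => ((MgZ g i j : ℤ) : ℚ) := by funext i j; exact hcast i j
  have hperB : per B = ((perZ (MgZ g) : ℤ) : ℚ) := by
    rw [per_eq_perE, hBM]; exact castPer _
  have hdetB : det B = ((detZ (MgZ g) : ℤ) : ℚ) := by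
    rw [det_eq_detE, hBM]; exact castDet _
  -- scaling relations
  have hc : ((∏ i, e i) * (∏ j, d j)) = 1 ∨ ((∏ i, e i) * (∏ j, d j)) = -1 :=
    pm_mul (prod_pm e he) (prod_pm d hd)
  set c : ℚ := (∏ i, e i) * (∏ j, d j) with hc_def
  have hperBA : per B = c * per A := per_smul e d A
  have hdetBA : det B = c * det A := by
    have hdiag : B = diagonal e * A * diagonal d := by
      ext i j
      simp [Matrix.mul_diagonal, Matrix.diagonal_mul, hB_def]
      ring
    rw [hdiag, det_mul, det_mul, det_diagonal, det_diagonal, hc_def]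
    ring
  have hc0 : c ≠ 0 := by rcases hc with h | h <;> rw [h] <;> norm_num
  have hdetZ0 : detZ (MgZ g) ≠ 0 := by
    intro h0
    apply hdet
    have hB0 : det B = 0 := by rw [hdetB, h0]; norm_num
    rw [hdetBA] at hB0
    exact (mul_eq_zero.mp hB0).resolve_left hc0
  obtain ⟨hbound, hequal, hless⟩ := MAIN g hdetZ0
  have habs : |per B| = |per A| := by
    have h1 : |per B| = |c| * |per A| := by rw [hperBA, abs_mul]
    have h2 : |c| = 1 := by rcases hc with h | h <;> rw [hc_def] at * <;> rw [h] <;> norm_num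
    rw [h1, h2, one_mul]
  have habsZ : |per A| = |((perZ (MgZ g) : ℤ) : ℚ)| := by rw [← habs, hperB]
  refine ⟨?_, ?_, ?_, ?_, ?_⟩
  · -- |per A| ≤ 8
    rw [habsZ, abs_le]
    constructor <;> [exact_mod_cast hbound.1; exact_mod_cast hbound.2]
  · rw [per_eq_perE]; with_unfolding_all rfl
  · -- equality case
    intro h8
    rw [habsZ] at h8
    have h8' : perZ (MgZ g) = 8 ∨ perZ (MgZ g) = -8 := by
      rcases (abs_eq (by norm_num : (0:ℚ) ≤ 8)).mp h8 with h | h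
      · left; exact_mod_cast h
      · right; exact_mod_cast h
    obtain ⟨f, f', hf, hf', hpat⟩ := hequal h8'
    have hfb : Function.Bijective f :=
      Finite.injective_iff_bijective.mp (fun a b h => hf a b h)
    have hf'b : Function.Bijective f' :=
      Finite.injective_iff_bijective.mp (fun a b h => hf' a b h)
    refine ⟨Equiv.ofBijective f hfb, Equiv.ofBijective f' hf'b,
      (fun i => e i * ((DZ (f i) (f' 0) * DZ (f 0) (f' 0) : ℤ) : ℚ)),
      (fun j => d j * ((DZ (f 0) (f' j) : ℤ) : ℚ)), ?_, ?_, Or.inl ?_⟩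
    · intro i
      refine pm_mul (he i) ?_
      push_cast
      exact pm_mul (DZ_pm _ _) (DZ_pm _ _)
    · intro j
      exact pm_mul (hd j) (DZ_pm _ _)
    · intro i j
      have hAB : A i j = e i * d j * B i j := by
        show A i j = e i * d j * (e i * d j * A i j)
        linear_combination (-(d j * d j * A i j)) * sq1 (he i) + (-(A i j)) * sq1 (hd j)
      have hDij : Dmat 4 4 (Equiv.ofBijective f hfb i) (Equiv.ofBijective f' hf'b j)
          = ((DZ (f i) (f' j) : ℤ) : ℚ) := hD_cast (f i) (f' j)
      rw [hDij, hAB, hcast i j, hpat i j]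
      push_cast
      ring
  · -- strict case
    intro hlt
    have hne : ¬(perZ (MgZ g) = 8 ∨ perZ (MgZ g) = -8) := by
      rintro (h | h) <;>
      · rw [habsZ, h] at hlt
        norm_num at hlt
    obtain ⟨h1, h2⟩ := hless hne
    rw [habsZ, abs_le]
    constructor <;> [exact_mod_cast h1; exact_mod_cast h2]
  · rw [per_eq_perE]; with_unfolding_all rfl
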